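/- Let M be an n×n integer matrix with determinant ±1 such that no complex eigenvalue of M is a root of unity. Then for every nonzero integer vector a ∈ ℤ^n and every integer vector b ∈ ℤ^n, there exists K ∈ ℕ such that for all k ≥ K one has (M^T)^k a ≠ b; consequently, for all k ≥ K, the correlation integral ∫_{(ℝ/ℤ)^n} e^{2πi⟨a, M^k x⟩} e^{-2πi⟨b, x⟩} dx with respect to the Haar probability measure equals 0. -/

import Mathlib

open MeasureTheory Matrix Polynomial

private lemma aux_eval_charpoly (n : ℕ) (A : Matrix (Fin n) (Fin n) ℂ) (z : ℂ) :
    A.charpoly.eval z = (z • (1 : Matrix (Fin n) (Fin n) ℂ) - A).det := by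
  rw [Matrix.charpoly, ← Polynomial.coe_evalRingHom, RingHom.map_det]
  congr 1
  ext i j
  simp [Matrix.charmatrix_apply, Matrix.one_apply, Matrix.smul_apply, apply_ite,
    Matrix.diagonal_apply]

private lemma aux_det_pow_sub_one (n : ℕ) (A : Matrix (Fin n) (Fin n) ℂ)
    (hM : ∀ z : ℂ, A.charpoly.IsRoot z → ∀ m : ℕ, 1 ≤ m → z ^ m ≠ 1)
    (m : ℕ) (hm : 1 ≤ m) : (A ^ m - 1).det ≠ 0 := by
  set p : ℂ[X] := X ^ m - C 1 with hp
  have hmonic : p.Monic := monic_X_pow_sub_C 1 (by omega)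
  have hsplit : p.Splits := IsAlgClosed.splits _
  have hfact : p = ((p.roots.toList).map (fun r => X - C r)).prod := by
    conv_lhs => rw [hsplit.eq_prod_roots_of_monic hmonic,
      ← Multiset.coe_toList p.roots, Multiset.map_coe, Multiset.prod_coe]
  have haev : A ^ m - 1 = ((p.roots.toList).map (fun r => A - r • 1)).prod := by
    have h1 : A ^ m - 1 = (aeval A) p := by simp [hp]
    rw [h1]
    conv_lhs => rw [hfact]
    rw [map_list_prod (aeval A), List.map_map]
    congr 1
    ext r
    simp [Algebra.algebraMap_eq_smul_one]
  rw [haev, ← Matrix.coe_detMonoidHom, map_list_prod, List.map_map]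
  intro h0
  rw [List.prod_eq_zero_iff] at h0
  simp only [List.mem_map, Function.comp_apply] at h0
  obtain ⟨r, hr, hd⟩ := h0
  have hr' : r ∈ p.roots := by rwa [← Multiset.mem_coe, Multiset.coe_toList] at hr
  have hrm : r ^ m = 1 := by
    have h2 := (mem_roots'.mp hr').2
    simpa [hp, sub_eq_zero] using h2
  have hroot : A.charpoly.IsRoot r := by
    have hneg : r • (1 : Matrix (Fin n) (Fin n) ℂ) - A = (-1 : ℂ) • (A - r • 1) := by
      simp [smul_sub, sub_eq_neg_add]; abel
    have : (r • (1 : Matrix (Fin n) (Fin n) ℂ) - A).det = 0 := by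
      rw [hneg, Matrix.det_smul]
      simp only [Matrix.coe_detMonoidHom] at hd
      rw [hd, mul_zero]
    rw [Polynomial.IsRoot, aux_eval_charpoly, this]
  exact hM r hroot m hm hrm

private lemma aux_no_fixed (n : ℕ) (M : Matrix (Fin n) (Fin n) ℤ)
    (hM : ∀ z : ℂ, (M.map (Int.cast : ℤ → ℂ)).charpoly.IsRoot z →
      ∀ m : ℕ, 1 ≤ m → z ^ m ≠ 1)
    (a : Fin n → ℤ) (ha : a ≠ 0) (m : ℕ) (hm : 1 ≤ m) :
    (Mᵀ ^ m) *ᵥ a ≠ a := by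
  intro h
  set A : Matrix (Fin n) (Fin n) ℂ := M.map (Int.cast : ℤ → ℂ) with hA
  have hdetA : (A ^ m - 1).det ≠ 0 := aux_det_pow_sub_one n A hM m hm
  set v : Fin n → ℂ := fun i => (a i : ℂ) with hv
  have hENT : ∀ i j, (Aᵀ ^ m) i j = ((Mᵀ ^ m) i j : ℂ) := by
    have hmap : (Mᵀ ^ m).map (Int.cast : ℤ → ℂ) = Aᵀ ^ m := by
      rw [hA, ← Matrix.transpose_map]
      exact map_pow (Int.castRingHom ℂ).mapMatrix Mᵀ m
    intro i j
    rw [← hmap]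
    rfl
  have hvA : (Aᵀ ^ m) *ᵥ v = v := by
    funext i
    have h1 : (((Mᵀ ^ m *ᵥ a) i : ℤ) : ℂ) = ((a i : ℤ) : ℂ) := by
      exact_mod_cast congrArg (fun w => ((w i : ℤ) : ℂ)) h
    calc (Aᵀ ^ m *ᵥ v) i = (((Mᵀ ^ m *ᵥ a) i : ℤ) : ℂ) := by
          simp only [Matrix.mulVec, dotProduct, hv, hENT]
          push_cast
          rfl
      _ = v i := by rw [h1]
  have hker : (Aᵀ ^ m - 1) *ᵥ v = 0 := by
    rw [Matrix.sub_mulVec, hvA, Matrix.one_mulVec, sub_self]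
  have hdet : (Aᵀ ^ m - 1).det ≠ 0 := by
    have : Aᵀ ^ m - 1 = (A ^ m - 1)ᵀ := by
      rw [Matrix.transpose_sub, Matrix.transpose_pow, Matrix.transpose_one]
    rw [this, Matrix.det_transpose]
    exact hdetA
  have hunit : IsUnit (Aᵀ ^ m - 1) := by
    rw [Matrix.isUnit_iff_isUnit_det]
    exact isUnit_iff_ne_zero.mpr hdet
  have hinj : Function.Injective ((Aᵀ ^ m - 1).mulVec) :=
    Matrix.mulVec_injective_iff_isUnit.mpr hunit
  have hv0 : v = 0 := hinj (a₂ := 0) (by rw [hker, Matrix.mulVec_zero])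
  apply ha
  funext i
  have : (a i : ℂ) = 0 := congrFun hv0 i
  exact_mod_cast this

private lemma aux_toCircle_sum {ι : Type*} (s : Finset ι) (f : ι → AddCircle (1:ℝ)) :
    ((AddCircle.toCircle (∑ j ∈ s, f j) : Circle) : ℂ)
      = ∏ j ∈ s, ((AddCircle.toCircle (f j) : Circle) : ℂ) := by
  classical
  induction s using Finset.cons_induction with
  | empty => simp
  | cons j s hj ih =>
    rw [Finset.sum_cons, Finset.prod_cons, AddCircle.toCircle_add, ← ih]
    push_cast
    ring

private lemma aux_integral_zero (n : ℕ) (c : Fin n → ℤ) (hc : c ≠ 0) :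
    ∫ x : Fin n → AddCircle (1 : ℝ),
      ((AddCircle.toCircle (∑ j, c j • x j) : Circle) : ℂ) ∂volume = 0 := by
  have hpt : ∀ x : Fin n → AddCircle (1:ℝ),
      ((AddCircle.toCircle (∑ j, c j • x j) : Circle) : ℂ)
        = ∏ j, (fourier (c j) (x j) : ℂ) := by
    intro x
    rw [aux_toCircle_sum]
    exact Finset.prod_congr rfl fun j _ => by rw [fourier_apply]
  simp_rw [hpt]
  rw [MeasureTheory.integral_fintype_prod_volume_eq_prod
    (f := fun j (y : AddCircle (1:ℝ)) => (fourier (c j) y : ℂ))]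
  obtain ⟨j0, hj0⟩ := Function.ne_iff.mp hc
  apply Finset.prod_eq_zero (Finset.mem_univ j0)
  apply integral_eq_zero_of_add_right_eq_neg
    (g := (((1:ℝ)/2/((c j0 : ℤ):ℝ) : ℝ) : AddCircle (1:ℝ)))
  intro x
  exact fourier_add_half_inv_index (by simpa using hj0) one_pos x

/-- for an `n × n` integer matrix `M` with determinant `±1` and no complex
eigenvalue a root of unity, for every nonzero integer vector `a` and every integer
vector `b` there is `K` such that for all `k ≥ K` one has `(Mᵀ)ᵏ a ≠ b`, and
consequently the correlation integral
`∫ e^{2πi⟨a, Mᵏ x⟩} e^{-2πi⟨b, x⟩} dx` over the torus `(ℝ/ℤ)ⁿ` vanishes. -/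
theorem correlation_of_characters_eventually_zero
    (n : ℕ) (M : Matrix (Fin n) (Fin n) ℤ)
    (hdet : M.det = 1 ∨ M.det = -1)
    (hM : ∀ z : ℂ, (M.map (Int.cast : ℤ → ℂ)).charpoly.IsRoot z →
      ∀ m : ℕ, 1 ≤ m → z ^ m ≠ 1)
    (a b : Fin n → ℤ) (ha : a ≠ 0) :
    ∃ K : ℕ, ∀ k : ℕ, K ≤ k →
      (Mᵀ ^ k) *ᵥ a ≠ b ∧
      ∫ x : Fin n → AddCircle (1 : ℝ),
        ((AddCircle.toCircle (∑ i, a i • (∑ j, (M ^ k) i j • x j)) : ℂ) *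
          (AddCircle.toCircle (-(∑ i, b i • x i)) : ℂ)) ∂volume = 0 := by
  -- first : the vector statement
  have hdetu : IsUnit M.det := by
    rcases hdet with h | h
    · rw [h]; exact isUnit_one
    · rw [h]; exact isUnit_one.neg
  -- invertibility over ℤ of powers of Mᵀ
  have hinv : ∀ k : ℕ, Function.Injective ((Mᵀ ^ k).mulVec) := by
    intro k
    have hu : IsUnit (Mᵀ ^ k).det := by
      rw [Matrix.det_pow, Matrix.det_transpose]
      exact hdetu.pow k
    have := Matrix.invertibleOfIsUnitDet _ hu
    intro u v huv
    have h1 : ⅟(Mᵀ ^ k) *ᵥ ((Mᵀ ^ k) *ᵥ u) = ⅟(Mᵀ ^ k) *ᵥ ((Mᵀ ^ k) *ᵥ v) := by rw [huv]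
    rwa [Matrix.mulVec_mulVec, Matrix.mulVec_mulVec, invOf_mul_self,
      Matrix.one_mulVec, Matrix.one_mulVec] at h1
  have hvec : ∀ K₀ : ℕ, ((Mᵀ ^ K₀) *ᵥ a = b) → ∀ k, K₀ < k → (Mᵀ ^ k) *ᵥ a ≠ b := by
    intro K₀ hK₀ k hk hkb
    have ha'0 : (Mᵀ ^ K₀) *ᵥ a ≠ 0 := fun h0 => ha <| hinv K₀
      (show (Mᵀ ^ K₀) *ᵥ a = (Mᵀ ^ K₀) *ᵥ 0 by rw [h0, Matrix.mulVec_zero])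
    have hsplit : (Mᵀ ^ (k - K₀)) *ᵥ ((Mᵀ ^ K₀) *ᵥ a) = (Mᵀ ^ K₀) *ᵥ a := by
      rw [Matrix.mulVec_mulVec, ← pow_add, show k - K₀ + K₀ = k from by omega, hkb, ← hK₀]
    exact aux_no_fixed n M hM _ ha'0 (k - K₀) (by omega) hsplit
  -- choose K
  by_cases hb : ∃ k : ℕ, (Mᵀ ^ k) *ᵥ a = b
  case neg =>
    refine ⟨0, fun k _ => ?_⟩
    have hne : (Mᵀ ^ k) *ᵥ a ≠ b := fun h => hb ⟨k, h⟩
    refine ⟨hne, ?_⟩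
    · -- the integral
      have hc : ((Mᵀ ^ k) *ᵥ a - b : Fin n → ℤ) ≠ 0 := sub_ne_zero.mpr hne
      have hpt : ∀ x : Fin n → AddCircle (1:ℝ),
          ((AddCircle.toCircle (∑ i, a i • (∑ j, (M ^ k) i j • x j)) : ℂ) *
            (AddCircle.toCircle (-(∑ i, b i • x i)) : ℂ))
          = ((AddCircle.toCircle
              (∑ j, ((Mᵀ ^ k) *ᵥ a - b : Fin n → ℤ) j • x j) : Circle) : ℂ) := by
        intro x
        rw [← Circle.coe_mul, ← AddCircle.toCircle_add]
        congr 1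
        have h1 : (∑ i, a i • (∑ j, (M ^ k) i j • x j))
            = ∑ j, ((Mᵀ ^ k) *ᵥ a) j • x j := by
          simp_rw [Finset.smul_sum, smul_smul]
          rw [Finset.sum_comm]
          refine Finset.sum_congr rfl fun j _ => ?_
          rw [← Finset.sum_smul]
          congr 1
          simp [Matrix.mulVec, dotProduct, ← Matrix.transpose_pow,
            Matrix.transpose_apply, mul_comm]
        rw [h1]
        simp only [Pi.sub_apply, sub_smul, Finset.sum_sub_distrib]
        abel_nf
        rfl
      simp_rw [hpt]
      exact aux_integral_zero n _ hc
  case pos =>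
    obtain ⟨k0, hk0⟩ := hb
    refine ⟨k0 + 1, fun k hk => ?_⟩
    have hne : (Mᵀ ^ k) *ᵥ a ≠ b := hvec k0 hk0 k (by omega)
    refine ⟨hne, ?_⟩
    · have hc : ((Mᵀ ^ k) *ᵥ a - b : Fin n → ℤ) ≠ 0 := sub_ne_zero.mpr hne
      have hpt : ∀ x : Fin n → AddCircle (1:ℝ),
          ((AddCircle.toCircle (∑ i, a i • (∑ j, (M ^ k) i j • x j)) : ℂ) *
            (AddCircle.toCircle (-(∑ i, b i • x i)) : ℂ))
          = ((AddCircle.toCircle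
              (∑ j, ((Mᵀ ^ k) *ᵥ a - b : Fin n → ℤ) j • x j) : Circle) : ℂ) := by
        intro x
        rw [← Circle.coe_mul, ← AddCircle.toCircle_add]
        congr 1
        have h1 : (∑ i, a i • (∑ j, (M ^ k) i j • x j))
            = ∑ j, ((Mᵀ ^ k) *ᵥ a) j • x j := by
          simp_rw [Finset.smul_sum, smul_smul]
          rw [Finset.sum_comm]
          refine Finset.sum_congr rfl fun j _ => ?_
          rw [← Finset.sum_smul]
          congr 1
          simp [Matrix.mulVec, dotProduct, ← Matrix.transpose_pow,
            Matrix.transpose_apply, mul_comm]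
        rw [h1]
        simp only [Pi.sub_apply, sub_smul, Finset.sum_sub_distrib]
        abel_nf
        rfl
      simp_rw [hpt]
      exact aux_integral_zero n _ hc
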